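/- With notation as above, if max_i d_i = 1, then I' = C ∩ P, where P = ⟨q_i : d_i = 0⟩ + ⟨y⟩ and C = ⟨q_1,...,q_m⟩. Moreover init(C + P) = init(C) + init(P). -/

import Mathlib

open MvPolynomial

noncomputable section

/-- The variable `y` (the last variable) in `R = k[x_1,…,x_n,y]`. -/
def yv (k : Type*) [Field k] (n : ℕ) : MvPolynomial (Fin (n + 1)) k :=
  X (Fin.last n)

/-- The degree in `y` (the last variable). -/
def ydeg {k : Type*} [Field k] {n : ℕ} (p : MvPolynomial (Fin (n + 1)) k) : ℕ :=
  p.support.sup (fun m => m (Fin.last n))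

/-- The initial `y`-form of `p`: the sum of all terms of `p` having the highest
power of `y`. -/
def iny {k : Type*} [Field k] {n : ℕ} (p : MvPolynomial (Fin (n + 1)) k) :
    MvPolynomial (Fin (n + 1)) k :=
  ∑ m ∈ p.support.filter (fun m => m (Fin.last n) = ydeg p), monomial m (p.coeff m)

/-- A term order on the monomials of a polynomial ring: a linear order on exponent
vectors compatible with addition and with `0` smallest. -/
structure TermOrder (σ : Type*) where
  lo : LinearOrder (σ →₀ ℕ)
  add_le : ∀ a b c : σ →₀ ℕ, lo.le a b → lo.le (a + c) (b + c)
  zero_le : ∀ a : σ →₀ ℕ, lo.le 0 a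

/-- The leading monomial of `p` (as an element of `WithBot`; `⊥` for `p = 0`). -/
def lm {k : Type*} [Field k] {σ : Type*} (ord : TermOrder σ)
    (p : MvPolynomial σ k) : WithBot (σ →₀ ℕ) :=
  letI := ord.lo
  p.support.max

/-- The leading term of `p` under the term order `ord`. -/
def leadTerm {k : Type*} [Field k] {σ : Type*} (ord : TermOrder σ)
    (p : MvPolynomial σ k) : MvPolynomial σ k :=
  letI := ord.lo
  if h : p.support.Nonempty then
    monomial (p.support.max' h) (p.coeff (p.support.max' h))
  else 0

/-- The initial ideal of `J` under `ord`: generated by the leading terms of the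
nonzero elements of `J`. -/
def initIdeal {k : Type*} [Field k] {σ : Type*} (ord : TermOrder σ)
    (J : Ideal (MvPolynomial σ k)) : Ideal (MvPolynomial σ k) :=
  Ideal.span { t | ∃ f ∈ J, f ≠ 0 ∧ t = leadTerm ord f }

namespace StmtAux

variable {k : Type*} [Field k] {n : ℕ}

/-- The substitution `y ↦ 0`. -/
def phi (k : Type*) [Field k] (n : ℕ) :
    MvPolynomial (Fin (n + 1)) k →ₐ[k] MvPolynomial (Fin (n + 1)) k :=
  aeval (fun i => if i = Fin.last n then 0 else X i)

lemma phi_X (i : Fin (n + 1)) :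
    phi k n (X i) = if i = Fin.last n then 0 else X i := by
  simp [phi]

lemma phi_yv : phi k n (yv k n) = 0 := by
  rw [yv, phi_X, if_pos rfl]

lemma yv_dvd_sub_phi (p : MvPolynomial (Fin (n + 1)) k) : yv k n ∣ p - phi k n p := by
  induction p using MvPolynomial.induction_on with
  | C a => simp [phi]
  | add p q hp hq =>
      simpa [map_add, sub_add_sub_comm] using dvd_add hp hq
  | mul_X p i hp =>
      rw [map_mul, phi_X]
      by_cases hi : i = Fin.last n
      · subst hi
        rw [if_pos rfl, mul_zero, sub_zero, ← yv]
        exact Dvd.intro_left p rfl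
      · rw [if_neg hi, ← sub_mul]
        exact hp.mul_right _

lemma phi_monomial (m : Fin (n + 1) →₀ ℕ) (c : k) (h : m (Fin.last n) = 0) :
    phi k n (monomial m c) = monomial m c := by
  rw [phi, aeval_monomial, algebraMap_eq, monomial_eq]
  congr 1
  refine Finsupp.prod_congr fun i hi => ?_
  rw [if_neg]
  rintro rfl
  exact Finsupp.mem_support_iff.mp hi h

lemma phi_eq_self {p : MvPolynomial (Fin (n + 1)) k}
    (h : ∀ m ∈ p.support, m (Fin.last n) = 0) : phi k n p = p := by
  have h1 : phi k n p = ∑ m ∈ p.support, phi k n (monomial m (coeff m p)) := by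
    conv_lhs => rw [p.as_sum]
    rw [map_sum]
  rw [h1]
  conv_rhs => rw [p.as_sum]
  exact Finset.sum_congr rfl fun m hm => phi_monomial m _ (h m hm)

lemma coeff_iny (p : MvPolynomial (Fin (n + 1)) k) (a : Fin (n + 1) →₀ ℕ) :
    coeff a (iny p) =
      if a ∈ p.support.filter (fun m => m (Fin.last n) = ydeg p) then coeff a p else 0 := by
  rw [iny, coeff_sum]
  simp_rw [coeff_monomial]
  exact Finset.sum_ite_eq' _ _ _

lemma ylast_of_mem_support_iny {p : MvPolynomial (Fin (n + 1)) k} {a : Fin (n + 1) →₀ ℕ}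
    (h : a ∈ (iny p).support) : a (Fin.last n) = ydeg p := by
  have h' := MvPolynomial.mem_support_iff.mp h
  rw [coeff_iny] at h'
  have : a ∈ p.support.filter (fun m => m (Fin.last n) = ydeg p) := by
    by_contra hc
    rw [if_neg hc] at h'
    exact h' rfl
  exact (Finset.mem_filter.mp this).2

lemma shift_coeff (dd : ℕ) (q : MvPolynomial (Fin (n + 1)) k) (m : Fin (n + 1) →₀ ℕ) :
    coeff (Finsupp.single (Fin.last n) dd + m) (X (Fin.last n) ^ dd * q) = coeff m q := by
  induction dd with
  | zero => simp
  | succ dd ih =>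
      have h1 : Finsupp.single (Fin.last n) (dd + 1) + m =
          Finsupp.single (Fin.last n) 1 + (Finsupp.single (Fin.last n) dd + m) := by
        rw [← add_assoc, ← Finsupp.single_add, add_comm 1 dd]
      rw [pow_succ', mul_assoc, h1, coeff_X_mul, ih]

lemma q_yfree (dd : ℕ) (q : MvPolynomial (Fin (n + 1)) k) (hq : ¬ yv k n ∣ q) (D : ℕ)
    (hhom : ∀ m' ∈ (yv k n ^ dd * q).support, m' (Fin.last n) = D) :
    ∀ m ∈ q.support, m (Fin.last n) = 0 := by
  have hex : ∃ m ∈ q.support, m (Fin.last n) = 0 := by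
    by_contra hall
    push_neg at hall
    have : yv k n ∣ ∑ m ∈ q.support, monomial m (coeff m q) :=
      Finset.dvd_sum fun m hm => X_dvd_monomial.mpr (Or.inr (hall m hm))
    rw [← q.as_sum] at this
    exact hq this
  obtain ⟨m₀, hm₀, hm₀0⟩ := hex
  have key : ∀ m ∈ q.support, dd + m (Fin.last n) = D := by
    intro m hm
    have hmem : Finsupp.single (Fin.last n) dd + m ∈ (yv k n ^ dd * q).support := by
      rw [MvPolynomial.mem_support_iff, yv, shift_coeff]
      exact MvPolynomial.mem_support_iff.mp hm
    have h2 := hhom _ hmem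
    simpa using h2
  intro m hm
  have h1 := key m hm
  have h2 := key m₀ hm₀
  rw [hm₀0] at h2
  omega

end StmtAux
namespace StmtAux

variable {k : Type*} [Field k] {n : ℕ} {m : ℕ}

lemma phi_mem_span (q : Fin m → MvPolynomial (Fin (n + 1)) k)
    (hfree : ∀ i, phi k n (q i) = q i) {c : MvPolynomial (Fin (n + 1)) k}
    (hc : c ∈ Ideal.span (Set.range q)) :
    phi k n c ∈ Ideal.span (Set.range q) := by
  obtain ⟨a, ha⟩ := (Submodule.mem_span_range_iff_exists_fun _).mp hc
  rw [← ha, map_sum]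
  refine Ideal.sum_mem _ fun i _ => ?_
  rw [smul_eq_mul, map_mul, hfree]
  exact Ideal.mul_mem_left _ _ (Ideal.subset_span ⟨i, rfl⟩)

lemma factor_y (q : Fin m → MvPolynomial (Fin (n + 1)) k)
    (hfree : ∀ i, phi k n (q i) = q i) {c : MvPolynomial (Fin (n + 1)) k}
    (hc : c ∈ Ideal.span (Set.range q)) (h0 : phi k n c = 0) :
    ∃ h ∈ Ideal.span (Set.range q), c = yv k n * h := by
  obtain ⟨a, ha⟩ := (Submodule.mem_span_range_iff_exists_fun _).mp hc
  choose b hb using fun i => yv_dvd_sub_phi (k := k) (n := n) (a i)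
  refine ⟨∑ i, b i * q i,
    Ideal.sum_mem _ fun i _ => Ideal.mul_mem_left _ _ (Ideal.subset_span ⟨i, rfl⟩), ?_⟩
  have hc' : c = c - phi k n c := by rw [h0, sub_zero]
  rw [hc']
  conv_lhs => rw [← ha]
  rw [map_sum, ← Finset.sum_sub_distrib, Finset.mul_sum]
  refine Finset.sum_congr rfl fun i _ => ?_
  rw [smul_eq_mul, map_mul, hfree, ← sub_mul, hb i]
  ring

lemma mem_Iprime (q : Fin m → MvPolynomial (Fin (n + 1)) k) (d : Fin m → ℕ)
    (hd1 : ∀ i, d i ≤ 1) (hfree : ∀ i, phi k n (q i) = q i)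
    {c : MvPolynomial (Fin (n + 1)) k}
    (hc : c ∈ Ideal.span (Set.range q)) (hy : yv k n ∣ c) :
    c ∈ Ideal.span (Set.range fun i => yv k n ^ d i * q i) := by
  have h0 : phi k n c = 0 := by
    obtain ⟨t, rfl⟩ := hy
    rw [map_mul, phi_yv, zero_mul]
  obtain ⟨h, hh, heq⟩ := factor_y q hfree hc h0
  obtain ⟨a, ha⟩ := (Submodule.mem_span_range_iff_exists_fun _).mp hh
  rw [heq, ← ha, Finset.mul_sum]
  refine Ideal.sum_mem _ fun i _ => ?_
  have hyq : yv k n * q i ∈ Ideal.span (Set.range fun i => yv k n ^ d i * q i) := by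
    rcases Nat.le_one_iff_eq_zero_or_eq_one.mp (hd1 i) with h' | h'
    · refine Ideal.mul_mem_left _ _ ?_
      have he : yv k n ^ d i * q i = q i := by rw [h', pow_zero, one_mul]
      rw [← he]
      exact Ideal.subset_span ⟨i, rfl⟩
    · have he : yv k n ^ d i * q i = yv k n * q i := by rw [h', pow_one]
      rw [← he]
      exact Ideal.subset_span ⟨i, rfl⟩
  have hcm : yv k n * (a i • q i) = a i * (yv k n * q i) := by
    rw [smul_eq_mul]; ring
  rw [hcm]
  exact Ideal.mul_mem_left _ _ hyq

end StmtAux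
namespace StmtAux

variable {k : Type*} [Field k] {n : ℕ}

lemma initIdeal_mono {σ : Type*} (ord : TermOrder σ) {J J' : Ideal (MvPolynomial σ k)}
    (h : J ≤ J') : initIdeal ord J ≤ initIdeal ord J' := by
  apply Ideal.span_mono
  rintro t ⟨f, hf, hf0, rfl⟩
  exact ⟨f, h hf, hf0, rfl⟩

lemma leadTerm_eq {σ : Type*} (ord : TermOrder σ) (p : MvPolynomial σ k)
    (hne : p.support.Nonempty) :
    letI := ord.lo
    leadTerm ord p = monomial (p.support.max' hne) (p.coeff (p.support.max' hne)) := by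
  rw [leadTerm, dif_pos hne]

lemma lm_eq {σ : Type*} (ord : TermOrder σ) (p : MvPolynomial σ k)
    (hne : p.support.Nonempty) :
    letI := ord.lo
    lm ord p = ((p.support.max' hne : σ →₀ ℕ) : WithBot (σ →₀ ℕ)) := by
  letI := ord.lo
  rw [lm, Finset.coe_max']

lemma leadTerm_yv (ord : TermOrder (Fin (n + 1))) :
    leadTerm (k := k) ord (yv k n) = yv k n := by
  letI := ord.lo
  have hne : (yv k n).support.Nonempty := support_nonempty.mpr (X_ne_zero _)
  have hmax : (yv k n).support.max' hne = Finsupp.single (Fin.last n) 1 := by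
    have hall : ∀ x ∈ (yv k n).support, x = Finsupp.single (Fin.last n) 1 := by
      intro x hx
      simp only [yv, support_X] at hx
      exact Finset.mem_singleton.mp hx
    exact hall _ (Finset.max'_mem _ hne)
  rw [leadTerm_eq ord _ hne, hmax]
  simp only [yv]
  rw [coeff_X, if_pos rfl, ← X_pow_eq_monomial, pow_one]

end StmtAux


/-- `g` is a Gröbner basis of `I` with respect to `ord`: the `g i` lie in `I`,
generate it, and the leading monomial of every nonzero element of `I` is divisible
by the leading monomial of some `g i`. -/
def IsGB {k : Type*} [Field k] {σ : Type*} {ι : Type*} (ord : TermOrder σ)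
    (I : Ideal (MvPolynomial σ k)) (g : ι → MvPolynomial σ k) : Prop :=
  (∀ i, g i ∈ I) ∧ I = Ideal.span (Set.range g) ∧
    ∀ f ∈ I, f ≠ 0 → ∃ (i : ι) (a b : σ →₀ ℕ),
      lm ord (g i) = (a : WithBot (σ →₀ ℕ)) ∧
      lm ord f = ((a + b : σ →₀ ℕ) : WithBot (σ →₀ ℕ))

/-- With `{y^{d i} * q i + r i}` a Gröbner basis of `I` as before, if
`max_i d i = 1` then `I' = C ∩ P` where `I' = ⟨y^{d i} q i⟩`, `C = ⟨q_1,…,q_m⟩`,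
and `P = ⟨q i : d i = 0⟩ + ⟨y⟩`; moreover `init(C + P) = init(C) + init(P)`. -/
theorem stmt_1 {k : Type*} [Field k] {n m : ℕ}
    (ord : TermOrder (Fin (n + 1)))
    (hord : ∀ p : MvPolynomial (Fin (n + 1)) k, lm ord p = lm ord (iny p))
    (I : Ideal (MvPolynomial (Fin (n + 1)) k))
    (d : Fin m → ℕ) (q r : Fin m → MvPolynomial (Fin (n + 1)) k)
    (hGB : IsGB ord I (fun i => yv k n ^ d i * q i + r i))
    (hiny : ∀ i, iny (yv k n ^ d i * q i + r i) = yv k n ^ d i * q i)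
    (hq : ∀ i, ¬ yv k n ∣ q i)
    (hd1 : ∀ i, d i ≤ 1) (hd : ∃ i, d i = 1) :
    Ideal.span (Set.range fun i => yv k n ^ d i * q i) =
        Ideal.span (Set.range q) ⊓
          (Ideal.span (q '' {i | d i = 0}) + Ideal.span {yv k n}) ∧
      initIdeal ord (Ideal.span (Set.range q) +
          (Ideal.span (q '' {i | d i = 0}) + Ideal.span {yv k n})) =
        initIdeal ord (Ideal.span (Set.range q)) +
          initIdeal ord (Ideal.span (q '' {i | d i = 0}) + Ideal.span {yv k n}) := by
  classical
  letI := ord.lo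
  have hfree : ∀ i, StmtAux.phi k n (q i) = q i := by
    intro i
    apply StmtAux.phi_eq_self
    apply StmtAux.q_yfree (d i) (q i) (hq i) (ydeg (yv k n ^ d i * q i + r i))
    intro m' hm'
    refine StmtAux.ylast_of_mem_support_iny (p := yv k n ^ d i * q i + r i) ?_
    rw [hiny i]
    exact hm'
  have hS0C : Ideal.span (q '' {i | d i = 0}) ≤ Ideal.span (Set.range q) :=
    Ideal.span_mono (by rintro _ ⟨i, _, rfl⟩; exact ⟨i, rfl⟩)
  have hS0I' : Ideal.span (q '' {i | d i = 0}) ≤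
      Ideal.span (Set.range fun i => yv k n ^ d i * q i) := by
    rw [Ideal.span_le]
    rintro _ ⟨i, hi, rfl⟩
    have hi0 : d i = 0 := hi
    have he : yv k n ^ d i * q i = q i := by rw [hi0, pow_zero, one_mul]
    rw [← he]
    exact Ideal.subset_span ⟨i, rfl⟩
  constructor
  · apply le_antisymm
    · rw [Ideal.span_le]
      rintro _ ⟨i, rfl⟩
      show yv k n ^ d i * q i ∈ _
      refine Submodule.mem_inf.mpr ⟨Ideal.mul_mem_left _ _ (Ideal.subset_span ⟨i, rfl⟩), ?_⟩
      rw [Submodule.add_eq_sup]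
      rcases Nat.le_one_iff_eq_zero_or_eq_one.mp (hd1 i) with h' | h'
      · apply Submodule.mem_sup_left
        have he : yv k n ^ d i * q i = q i := by rw [h', pow_zero, one_mul]
        rw [he]
        exact Ideal.subset_span ⟨i, h', rfl⟩
      · apply Submodule.mem_sup_right
        rw [h', pow_one]
        exact Ideal.mem_span_singleton.mpr ⟨q i, rfl⟩
    · intro f hf
      obtain ⟨hfC, hfP⟩ := Submodule.mem_inf.mp hf
      rw [Submodule.add_eq_sup] at hfP
      obtain ⟨u, hu, v, hv, rfl⟩ := Submodule.mem_sup.mp hfP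
      have hvC : v ∈ Ideal.span (Set.range q) :=
        (Submodule.add_mem_iff_right _ (hS0C hu)).mp hfC
      have hvI : v ∈ Ideal.span (Set.range fun i => yv k n ^ d i * q i) :=
        StmtAux.mem_Iprime q d hd1 hfree hvC (Ideal.mem_span_singleton.mp hv)
      exact add_mem (hS0I' hu) hvI
  · apply le_antisymm
    · rw [initIdeal, Ideal.span_le]
      rintro t ⟨f, hf, hf0, rfl⟩
      rw [Submodule.add_eq_sup] at hf
      obtain ⟨c, hc, p, hp, rfl⟩ := Submodule.mem_sup.mp hf
      rw [Submodule.add_eq_sup] at hp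
      obtain ⟨u, hu, v, hv, rfl⟩ := Submodule.mem_sup.mp hp
      obtain ⟨t, rfl⟩ := Ideal.mem_span_singleton.mp hv
      set f := c + (u + yv k n * t) with hfdef
      have hcu : c + u ∈ Ideal.span (Set.range q) := add_mem hc (hS0C hu)
      rw [Submodule.add_eq_sup]
      by_cases hydeg : ydeg f = 0
      · have hffree : ∀ m' ∈ f.support, m' (Fin.last n) = 0 := by
          intro m' hm'
          have h3 : m' (Fin.last n) ≤ ydeg f :=
            Finset.le_sup (f := fun m => m (Fin.last n)) hm'
          omega
        have hphif : StmtAux.phi k n f = f := StmtAux.phi_eq_self hffree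
        have hfC : f ∈ Ideal.span (Set.range q) := by
          rw [← hphif]
          have h2 : StmtAux.phi k n f = StmtAux.phi k n (c + u) := by
            rw [hfdef, ← add_assoc, map_add, map_add, map_mul, StmtAux.phi_yv, zero_mul,
              add_zero]
          rw [h2]
          exact StmtAux.phi_mem_span q hfree hcu
        exact Submodule.mem_sup_left (Ideal.subset_span ⟨f, hfC, hf0, rfl⟩)
      · have hne : f.support.Nonempty := support_nonempty.mpr hf0
        set a := f.support.max' hne with ha
        have hlm : lm ord f = (a : WithBot _) := StmtAux.lm_eq ord f hne
        have hlm2 : lm ord (iny f) = (a : WithBot _) := by rw [← hord]; exact hlm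
        have hmem : a ∈ (iny f).support := Finset.mem_of_max hlm2
        have halast : a (Fin.last n) = ydeg f := StmtAux.ylast_of_mem_support_iny hmem
        have hane : a (Fin.last n) ≠ 0 := by rw [halast]; exact hydeg
        have hle : Finsupp.single (Fin.last n) 1 ≤ a :=
          Finsupp.single_le_iff.mpr (Nat.one_le_iff_ne_zero.mpr hane)
        have hlt : leadTerm ord f =
            yv k n * monomial (a - Finsupp.single (Fin.last n) 1) (coeff a f) := by
          rw [StmtAux.leadTerm_eq ord f hne, ← ha]
          have hym : (yv k n) = monomial (Finsupp.single (Fin.last n) 1) (1 : k) := by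
            simp only [yv]
            rw [← X_pow_eq_monomial, pow_one]
          rw [hym, monomial_mul, one_mul, add_tsub_cancel_of_le hle]
        have hyP : yv k n ∈ initIdeal ord
            (Ideal.span (q '' {i | d i = 0}) + Ideal.span {yv k n}) :=
          Ideal.subset_span ⟨yv k n,
            by
              rw [Submodule.add_eq_sup]
              exact Submodule.mem_sup_right (Ideal.subset_span rfl),
            X_ne_zero _, (StmtAux.leadTerm_yv ord).symm⟩
        apply Submodule.mem_sup_right
        rw [hlt]
        exact Ideal.mul_mem_right _ _ hyP
    · rw [Submodule.add_eq_sup, Submodule.add_eq_sup]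
      apply sup_le
      · exact StmtAux.initIdeal_mono ord le_sup_left
      · exact StmtAux.initIdeal_mono ord le_sup_right
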